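/- Let C = {c₁, …, cₙ} ⊆ ℝ^d be a set of n ≥ 2 points, not all equal. For each coordinate b ∈ [d], let p^(b) = max over pairs i ≠ j with cᵢ ≠ cⱼ of |cᵢ^(b) − cⱼ^(b)| / ‖cᵢ − cⱼ‖₁. Then 1 ≤ Σ_{b ∈ [d]} p^(b) ≤ n. -/

import Mathlib

open Finset

section Aux

variable {n : ℕ} [NeZero n]

/-- Chain of parent-edges (keyed by child) from `u` toward the root `0`, with fuel `f`. -/
def chainF (par : Fin n → Fin n) : ℕ → Fin n → Finset (Fin n)
  | 0, _ => ∅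
  | f + 1, u => if u = 0 then ∅ else insert u (chainF par f (par u))

lemma chainF_prop {par rnk : Fin n → Fin n}
    (hv : ∀ k, k ≠ 0 → rnk (par k) < rnk k) :
    ∀ (f : ℕ) (u x : Fin n), x ∈ chainF par f u → x ≠ 0 ∧ rnk x ≤ rnk u := by
  intro f
  induction f with
  | zero => intro u x hx; simp [chainF] at hx
  | succ f ih =>
    intro u x hx
    by_cases hu : u = 0
    · simp [chainF, hu] at hx
    · simp only [chainF, if_neg hu, Finset.mem_insert] at hx
      rcases hx with rfl | hx
      · exact ⟨hu, le_refl _⟩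
      · obtain ⟨h1, h2⟩ := ih (par u) x hx
        exact ⟨h1, le_trans h2 (le_of_lt (hv u hu))⟩

lemma chainF_telescope {par rnk : Fin n → Fin n}
    (hv : ∀ k, k ≠ 0 → rnk (par k) < rnk k) (g : Fin n → ℝ) :
    ∀ (f : ℕ) (u : Fin n), (rnk u : ℕ) < f →
      g u - g 0 = ∑ x ∈ chainF par f u, (g x - g (par x)) := by
  intro f
  induction f with
  | zero => intro u hu; omega
  | succ f ih =>
    intro u hu
    by_cases h0 : u = 0
    · simp [chainF, h0]
    · have hlt : (rnk (par u) : ℕ) < f := by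
        have := hv u h0
        simp only [Fin.lt_def] at this
        omega
      have hnotmem : u ∉ chainF par f (par u) := by
        intro hmem
        exact absurd ((chainF_prop hv f (par u) u hmem).2) (not_le.mpr (hv u h0))
      simp only [chainF, if_neg h0]
      rw [Finset.sum_insert hnotmem, ← ih (par u) hlt]
      ring

/-- Adjacency via an explicit (ordered-pair) edge set. -/
def EAdj (A : Finset (Fin n × Fin n)) (a b : Fin n) : Prop := (a, b) ∈ A ∨ (b, a) ∈ A

def Conn (A : Finset (Fin n × Fin n)) : Fin n → Fin n → Prop :=
  Relation.ReflTransGen (EAdj A)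

lemma conn_mono {A B : Finset (Fin n × Fin n)} (h : A ⊆ B) {a b : Fin n}
    (hc : Conn A a b) : Conn B a b :=
  Relation.ReflTransGen.mono (p := EAdj B) (fun x y (hxy : EAdj A x y) => hxy.imp (fun h' => h h') (fun h' => h h')) a b hc

lemma conn_symm {A : Finset (Fin n × Fin n)} {a b : Fin n} (h : Conn A a b) : Conn A b a :=
  (@Relation.ReflTransGen.stdSymm _ (EAdj A) ⟨fun _ _ hxy => hxy.symm⟩).symm _ _ h

lemma chainF_conn {par rnk : Fin n → Fin n}
    (hv : ∀ k, k ≠ 0 → rnk (par k) < rnk k) (A : Finset (Fin n × Fin n))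
    (hA : ∀ k, k ≠ 0 → (k, par k) ∈ A) (xs : Fin n) :
    ∀ (f : ℕ) (u : Fin n), (rnk u : ℕ) < f →
      (xs ∈ chainF par f u → Conn (A.erase (xs, par xs)) u xs) ∧
      (xs ∉ chainF par f u → Conn (A.erase (xs, par xs)) u 0) := by
  intro f
  induction f with
  | zero => intro u hu; omega
  | succ f ih =>
    intro u hu
    by_cases h0 : u = 0
    · subst h0
      constructor
      · intro hmem; simp [chainF] at hmem
      · intro _; exact Relation.ReflTransGen.refl
    · have hlt : (rnk (par u) : ℕ) < f := by
        have := hv u h0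
        simp only [Fin.lt_def] at this
        omega
      by_cases hux : u = xs
      · subst hux
        constructor
        · intro _; exact Relation.ReflTransGen.refl
        · intro hmem
          exfalso; apply hmem
          simp [chainF, if_neg h0]
      · have hedge : EAdj (A.erase (xs, par xs)) u (par u) := by
          left
          refine Finset.mem_erase.mpr ⟨?_, hA u h0⟩
          intro hcontra
          exact hux (congrArg Prod.fst hcontra)
        have hmem_iff : xs ∈ chainF par (f + 1) u ↔ xs ∈ chainF par f (par u) := by
          simp [chainF, if_neg h0, Ne.symm hux]
        constructor
        · intro hmem
          exact Relation.ReflTransGen.head hedge ((ih (par u) hlt).1 (hmem_iff.mp hmem))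
        · intro hmem
          exact Relation.ReflTransGen.head hedge
            ((ih (par u) hlt).2 (fun hc => hmem (hmem_iff.mpr hc)))

/-- Reachability to the root in at most `m` steps. -/
def RJ (A : Finset (Fin n × Fin n)) : ℕ → Fin n → Prop
  | 0, z => z = 0
  | m + 1, z => z = 0 ∨ ∃ w, EAdj A z w ∧ RJ A m w

/-- Any edge set connecting everything to the root admits a parent/rank encoding. -/
lemma encode (A : Finset (Fin n × Fin n)) (hconn : ∀ z : Fin n, Conn A z 0) :
    ∃ par₂ rnk₂ : Fin n → Fin n, (∀ k, k ≠ 0 → rnk₂ (par₂ k) < rnk₂ k) ∧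
      ∀ k, k ≠ 0 → ((k, par₂ k) ∈ A ∨ (par₂ k, k) ∈ A) := by
  classical
  have hex : ∀ z : Fin n, ∃ m, RJ A m z := by
    intro z
    refine Relation.ReflTransGen.head_induction_on (hconn z) ⟨0, rfl⟩ ?_
    rintro a b hab _ ⟨m, hm⟩
    exact ⟨m + 1, Or.inr ⟨b, hab, hm⟩⟩
  let N : Fin n → ℕ := fun z => Nat.find (hex z)
  have hstep : ∀ z : Fin n, z ≠ 0 → ∃ w, EAdj A z w ∧ N w < N z := by
    intro z hz
    have hNz : RJ A (N z) z := Nat.find_spec (hex z)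
    have hNpos : N z ≠ 0 := by
      intro h
      rw [h] at hNz
      exact hz hNz
    obtain ⟨m, hm⟩ := Nat.exists_eq_succ_of_ne_zero hNpos
    rw [hm] at hNz
    rcases hNz with h | ⟨w, hadj, hw⟩
    · exact absurd h hz
    · refine ⟨w, hadj, ?_⟩
      have : N w ≤ m := Nat.find_min' (hex w) hw
      omega
  let par₂ : Fin n → Fin n := fun z =>
    if hz : z = 0 then 0 else Classical.choose (hstep z hz)
  have hpar : ∀ z (hz : z ≠ 0), EAdj A z (par₂ z) ∧ N (par₂ z) < N z := by
    intro z hz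
    simp only [par₂, dif_neg hz]
    exact Classical.choose_spec (hstep z hz)
  have hn1 : 1 ≤ n := Nat.one_le_iff_ne_zero.mpr (NeZero.ne n)
  let rnk₂ : Fin n → Fin n := fun z =>
    ⟨(univ.filter fun w => N w < N z).card, by
      have hsub : (univ.filter fun w => N w < N z) ⊆ univ.erase z := by
        intro w hw
        simp only [Finset.mem_filter] at hw
        refine Finset.mem_erase.mpr ⟨?_, Finset.mem_univ _⟩
        rintro rfl
        exact lt_irrefl _ hw.2
      calc (univ.filter fun w => N w < N z).card ≤ (univ.erase z).card :=
            Finset.card_le_card hsub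
        _ = n - 1 := by rw [Finset.card_erase_of_mem (Finset.mem_univ _), Finset.card_univ,
            Fintype.card_fin]
        _ < n := by omega⟩
  refine ⟨par₂, rnk₂, ?_, fun k hk => (hpar k hk).1⟩
  intro k hk
  have hNlt : N (par₂ k) < N k := (hpar k hk).2
  have hss : (univ.filter fun w => N w < N (par₂ k)) ⊂ (univ.filter fun w => N w < N k) := by
    constructor
    · intro w hw
      simp only [Finset.mem_filter] at hw ⊢
      exact ⟨hw.1, lt_trans hw.2 hNlt⟩
    · intro hsub
      have : par₂ k ∈ (univ.filter fun w => N w < N k) := by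
        simp only [Finset.mem_filter]
        exact ⟨Finset.mem_univ _, hNlt⟩
      have := hsub this
      simp only [Finset.mem_filter] at this
      exact lt_irrefl _ this.2
  exact Finset.card_lt_card hss

end Aux

section Dist

variable {n d : ℕ} [NeZero n] (c : Fin n → Fin d → ℝ)

/-- ℓ1 distance between points `c i` and `c j`. -/
noncomputable def dd (i j : Fin n) : ℝ := ∑ b : Fin d, |c i b - c j b|

lemma dd_nonneg (i j : Fin n) : 0 ≤ dd c i j :=
  Finset.sum_nonneg fun _ _ => abs_nonneg _

lemma dd_comm (i j : Fin n) : dd c i j = dd c j i := by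
  unfold dd
  exact Finset.sum_congr rfl fun b _ => abs_sub_comm _ _

lemma dd_pos {i j : Fin n} (h : c i ≠ c j) : 0 < dd c i j := by
  obtain ⟨b, hb⟩ := Function.ne_iff.mp h
  refine Finset.sum_pos' (fun _ _ => abs_nonneg _) ⟨b, Finset.mem_univ _, ?_⟩
  exact abs_pos.mpr (sub_ne_zero.mpr hb)

lemma dd_coord_zero {i j : Fin n} (h : dd c i j = 0) (b : Fin d) : |c i b - c j b| = 0 := by
  have := (Finset.sum_eq_zero_iff_of_nonneg (fun _ _ => abs_nonneg (α := ℝ) _)).mp h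
  exact this b (Finset.mem_univ _)

/-- Total tree weight of a parent encoding. -/
noncomputable def tw (par : Fin n → Fin n) : ℝ :=
  ∑ k ∈ (univ : Finset (Fin n)).erase 0, dd c k (par k)

/-- Minimax property of the minimum-weight spanning tree: any edge on the tree path
between `u` and `v` is no longer than `dd u v`. -/
lemma minimax (par rnk : Fin n → Fin n)
    (hv : ∀ k, k ≠ 0 → rnk (par k) < rnk k)
    (hmin : ∀ par' rnk' : Fin n → Fin n,
      (∀ k, k ≠ 0 → rnk' (par' k) < rnk' k) → tw c par ≤ tw c par')
    (u v x : Fin n)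
    (hx : x ∈ (chainF par n u \ chainF par n v) ∪ (chainF par n v \ chainF par n u)) :
    dd c x (par x) ≤ dd c u v := by
  classical
  by_contra hcon
  push_neg at hcon
  -- basic facts about x
  have hxchain : x ∈ chainF par n u ∨ x ∈ chainF par n v := by
    rcases Finset.mem_union.mp hx with h | h
    · exact Or.inl (Finset.mem_sdiff.mp h).1
    · exact Or.inr (Finset.mem_sdiff.mp h).1
  have hx0 : x ≠ 0 := by
    rcases hxchain with h | h
    · exact (chainF_prop hv n _ _ h).1
    · exact (chainF_prop hv n _ _ h).1
  -- the tree edge set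
  set G0 : Finset (Fin n × Fin n) :=
    ((univ : Finset (Fin n)).erase 0).image (fun k => (k, par k)) with hG0
  have hAmem : ∀ k : Fin n, k ≠ 0 → (k, par k) ∈ G0 := by
    intro k hk
    exact Finset.mem_image.mpr ⟨k, Finset.mem_erase.mpr ⟨hk, Finset.mem_univ _⟩, rfl⟩
  set G'' : Finset (Fin n × Fin n) := G0.erase (x, par x) with hG''
  set A' : Finset (Fin n × Fin n) := insert (u, v) G'' with hA'
  have hG''sub : G'' ⊆ A' := Finset.subset_insert _ _
  -- connectivity of A'
  have hrank_lt : ∀ z : Fin n, (rnk z : ℕ) < n := fun z => (rnk z).isLt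
  have hconnA' : ∀ z : Fin n, Conn A' z 0 := by
    have huv : Conn A' u 0 → Conn A' v 0 → ∀ z : Fin n, Conn A' z 0 := by
      intro hu0 hv0 z
      by_cases hz : x ∈ chainF par n z
      · have hzx : Conn G'' z x := (chainF_conn hv G0 hAmem x n z (hrank_lt z)).1 hz
        have hxz : Conn A' z x := conn_mono hG''sub hzx
        rcases hxchain with h | h
        · have : Conn G'' u x := (chainF_conn hv G0 hAmem x n u (hrank_lt u)).1 h
          exact hxz.trans ((conn_symm (conn_mono hG''sub this)).trans hu0)
        · have : Conn G'' v x := (chainF_conn hv G0 hAmem x n v (hrank_lt v)).1 h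
          exact hxz.trans ((conn_symm (conn_mono hG''sub this)).trans hv0)
      · exact conn_mono hG''sub ((chainF_conn hv G0 hAmem x n z (hrank_lt z)).2 hz)
    have hedgeuv : Conn A' u v :=
      Relation.ReflTransGen.single (Or.inl (Finset.mem_insert_self _ _))
    rcases Finset.mem_union.mp hx with h | h
    · obtain ⟨hxu, hxv⟩ := Finset.mem_sdiff.mp h
      have hv0 : Conn A' v 0 :=
        conn_mono hG''sub ((chainF_conn hv G0 hAmem x n v (hrank_lt v)).2 hxv)
      exact huv (hedgeuv.trans hv0) hv0
    · obtain ⟨hxv, hxu⟩ := Finset.mem_sdiff.mp h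
      have hu0 : Conn A' u 0 :=
        conn_mono hG''sub ((chainF_conn hv G0 hAmem x n u (hrank_lt u)).2 hxu)
      exact huv hu0 ((conn_symm hedgeuv).trans hu0)
  -- re-encode
  obtain ⟨par₂, rnk₂, hv₂, hedge₂⟩ := encode A' hconnA'
  -- weight of the new encoding is at most the total weight of A'
  have hk_ne_par₂ : ∀ k : Fin n, k ≠ 0 → k ≠ par₂ k := by
    intro k hk h
    have := hv₂ k hk
    rw [← h] at this
    exact lt_irrefl _ this
  set φ : Fin n → Fin n × Fin n := fun k =>
    if (k, par₂ k) ∈ A' then (k, par₂ k) else (par₂ k, k) with hφ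
  have hφmem : ∀ k ∈ (univ : Finset (Fin n)).erase 0, φ k ∈ A' := by
    intro k hk
    have hk0 : k ≠ 0 := (Finset.mem_erase.mp hk).1
    simp only [hφ]
    split
    · assumption
    · rcases hedge₂ k hk0 with h | h
      · exact absurd h (by assumption)
      · exact h
  have hφinj : ∀ a ∈ (univ : Finset (Fin n)).erase 0, ∀ b ∈ (univ : Finset (Fin n)).erase 0,
      φ a = φ b → a = b := by
    intro a ha b hb hab
    have ha0 : a ≠ 0 := (Finset.mem_erase.mp ha).1
    have hb0 : b ≠ 0 := (Finset.mem_erase.mp hb).1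
    have key : (a = b) ∨ (a = par₂ b ∧ par₂ a = b) := by
      simp only [hφ] at hab
      split at hab <;> split at hab <;>
        simp only [Prod.mk.injEq] at hab
      · exact Or.inl hab.1
      · exact Or.inr ⟨hab.1, hab.2⟩
      · exact Or.inr ⟨hab.2, hab.1⟩
      · exact Or.inl hab.2
    rcases key with h | ⟨h1, h2⟩
    · exact h
    · exfalso
      have hlta := hv₂ a ha0
      have hltb := hv₂ b hb0
      rw [h2] at hlta
      rw [← h1] at hltb
      exact lt_irrefl _ (hlta.trans hltb)
  have hw₂le : tw c par₂ ≤ ∑ e ∈ A', dd c e.1 e.2 := by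
    have h1 : tw c par₂ = ∑ k ∈ (univ : Finset (Fin n)).erase 0, dd c (φ k).1 (φ k).2 := by
      unfold tw
      refine Finset.sum_congr rfl fun k hk => ?_
      simp only [hφ]
      split
      · rfl
      · exact dd_comm c k (par₂ k)
    rw [h1, ← Finset.sum_image (f := fun e : Fin n × Fin n => dd c e.1 e.2) hφinj]
    refine Finset.sum_le_sum_of_subset_of_nonneg ?_ (fun e _ _ => dd_nonneg c _ _)
    intro e he
    obtain ⟨k, hk, rfl⟩ := Finset.mem_image.mp he
    exact hφmem k hk
  -- the total weight of A' is strictly less than tw c par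
  have hG0sum : ∑ e ∈ G0, dd c e.1 e.2 = tw c par := by
    rw [hG0, Finset.sum_image]
    · rfl
    · intro a _ b _ h
      exact congrArg Prod.fst h
  have hxG0 : (x, par x) ∈ G0 := hAmem x hx0
  have hG''sum : ∑ e ∈ G'', dd c e.1 e.2 = tw c par - dd c x (par x) := by
    have := Finset.add_sum_erase G0 (fun e : Fin n × Fin n => dd c e.1 e.2) hxG0
    rw [hG''] at *
    simp only at this
    linarith [hG0sum, this]
  have hA'sum : ∑ e ∈ A', dd c e.1 e.2 ≤ dd c u v + ∑ e ∈ G'', dd c e.1 e.2 := by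
    by_cases hmem : (u, v) ∈ G''
    · rw [hA', Finset.insert_eq_self.mpr hmem]
      linarith [dd_nonneg c u v]
    · rw [hA', Finset.sum_insert hmem]
  have hlt : tw c par₂ < tw c par := by
    calc tw c par₂ ≤ ∑ e ∈ A', dd c e.1 e.2 := hw₂le
      _ ≤ dd c u v + (tw c par - dd c x (par x)) := by rw [← hG''sum]; exact hA'sum
      _ < tw c par := by linarith
  exact absurd (hmin par₂ rnk₂ hv₂) (not_le.mpr hlt)

end Dist

section Coord

variable {n d : ℕ} [NeZero n] (c : Fin n → Fin d → ℝ)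

lemma coord_bound (par rnk : Fin n → Fin n)
    (hv : ∀ k, k ≠ 0 → rnk (par k) < rnk k)
    (hmin : ∀ par' rnk' : Fin n → Fin n,
      (∀ k, k ≠ 0 → rnk' (par' k) < rnk' k) → tw c par ≤ tw c par')
    (i j : Fin n) (b : Fin d) :
    |c i b - c j b| ≤
      ∑ x ∈ ((univ : Finset (Fin n)).erase 0).filter
        (fun k => dd c k (par k) ≤ dd c i j), |c x b - c (par x) b| := by
  classical
  set A := chainF par n i with hA
  set B := chainF par n j with hB
  set δ : Fin n → ℝ := fun x => c x b - c (par x) b with hδ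
  have hteli : c i b - c 0 b = ∑ x ∈ A, δ x :=
    chainF_telescope hv (fun z => c z b) n i (rnk i).isLt
  have htelj : c j b - c 0 b = ∑ x ∈ B, δ x :=
    chainF_telescope hv (fun z => c z b) n j (rnk j).isLt
  have hij : c i b - c j b = ∑ x ∈ A \ B, δ x - ∑ x ∈ B \ A, δ x := by
    have h1 : ∑ x ∈ A ∩ B, δ x + ∑ x ∈ A \ B, δ x = ∑ x ∈ A, δ x :=
      Finset.sum_inter_add_sum_sdiff A B δ
    have h2 : ∑ x ∈ B ∩ A, δ x + ∑ x ∈ B \ A, δ x = ∑ x ∈ B, δ x :=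
      Finset.sum_inter_add_sum_sdiff B A δ
    rw [Finset.inter_comm] at h2
    have : c i b - c j b = (∑ x ∈ A, δ x) - (∑ x ∈ B, δ x) := by
      rw [← hteli, ← htelj]; ring
    rw [this, ← h1, ← h2]; ring
  have habs : |c i b - c j b| ≤ ∑ x ∈ (A \ B) ∪ (B \ A), |δ x| := by
    rw [hij, Finset.sum_union (disjoint_sdiff_sdiff)]
    calc |∑ x ∈ A \ B, δ x - ∑ x ∈ B \ A, δ x|
        ≤ |∑ x ∈ A \ B, δ x| + |∑ x ∈ B \ A, δ x| := abs_sub _ _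
      _ ≤ ∑ x ∈ A \ B, |δ x| + ∑ x ∈ B \ A, |δ x| :=
          add_le_add (Finset.abs_sum_le_sum_abs _ _) (Finset.abs_sum_le_sum_abs _ _)
  refine le_trans habs (Finset.sum_le_sum_of_subset_of_nonneg ?_ fun _ _ _ => abs_nonneg _)
  intro x hxmem
  have hx0 : x ≠ 0 := by
    rcases Finset.mem_union.mp hxmem with h | h
    · exact (chainF_prop hv n _ _ (Finset.mem_sdiff.mp h).1).1
    · exact (chainF_prop hv n _ _ (Finset.mem_sdiff.mp h).1).1
  have hxle : dd c x (par x) ≤ dd c i j := minimax c par rnk hv hmin i j x hxmem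
  exact Finset.mem_filter.mpr ⟨Finset.mem_erase.mpr ⟨hx0, Finset.mem_univ _⟩, hxle⟩

end Coord

theorem sum_max_ratio_l1_bounds (n d : ℕ) (hn : 2 ≤ n) (c : Fin n → Fin d → ℝ)
    (hne : ∃ i j : Fin n, c i ≠ c j) :
    1 ≤ (∑ b : Fin d, sSup {v : ℝ | ∃ i j : Fin n, c i ≠ c j ∧
          v = |c i b - c j b| / ∑ b' : Fin d, |c i b' - c j b'|}) ∧
    (∑ b : Fin d, sSup {v : ℝ | ∃ i j : Fin n, c i ≠ c j ∧
          v = |c i b - c j b| / ∑ b' : Fin d, |c i b' - c j b'|}) ≤ n := by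
  classical
  haveI : NeZero n := ⟨by omega⟩
  obtain ⟨i0, j0, hij0⟩ := hne
  set S : Fin d → Set ℝ := fun b => {v : ℝ | ∃ i j : Fin n, c i ≠ c j ∧
    v = |c i b - c j b| / ∑ b' : Fin d, |c i b' - c j b'|} with hS
  have hSne : ∀ b, (S b).Nonempty := fun b => ⟨_, i0, j0, hij0, rfl⟩
  have hSbdd : ∀ b, BddAbove (S b) := by
    intro b
    have hsub : S b ⊆ Set.range (fun p : Fin n × Fin n =>
        |c p.1 b - c p.2 b| / ∑ b' : Fin d, |c p.1 b' - c p.2 b'|) := by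
      rintro v ⟨i, j, _, rfl⟩
      exact ⟨(i, j), rfl⟩
    exact ((Set.finite_range _).subset hsub).bddAbove
  have hdd_eq : ∀ i j : Fin n, (∑ b' : Fin d, |c i b' - c j b'|) = dd c i j := fun _ _ => rfl
  constructor
  · -- lower bound
    have hD : 0 < dd c i0 j0 := dd_pos c hij0
    have h1 : (1 : ℝ) = ∑ b : Fin d, |c i0 b - c j0 b| / dd c i0 j0 := by
      rw [← Finset.sum_div, hdd_eq i0 j0]
      exact (div_self (ne_of_gt hD)).symm
    rw [h1]
    refine Finset.sum_le_sum fun b _ => ?_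
    exact le_csSup (hSbdd b) ⟨i0, j0, hij0, by rw [hdd_eq]⟩
  · -- upper bound: build a minimum-weight spanning tree (parent encoding)
    set s : Finset ((Fin n → Fin n) × (Fin n → Fin n)) :=
      univ.filter (fun p => ∀ k, k ≠ 0 → p.2 (p.1 k) < p.2 k) with hs
    have hsne : s.Nonempty := by
      refine ⟨(fun _ => 0, fun k => k), ?_⟩
      simp only [hs, Finset.mem_filter, Finset.mem_univ, true_and]
      intro k hk
      have hkv : (k : ℕ) ≠ 0 := fun h => hk (Fin.ext (by simpa using h))
      simp only [Fin.lt_def, Fin.val_zero]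
      omega
    obtain ⟨p, hp, hpmin⟩ := Finset.exists_min_image s (fun p => tw c p.1) hsne
    set par := p.1 with hpar
    set rnk := p.2 with hrnk
    have hv : ∀ k, k ≠ 0 → rnk (par k) < rnk k := (Finset.mem_filter.mp hp).2
    have hmin : ∀ par' rnk' : Fin n → Fin n,
        (∀ k, k ≠ 0 → rnk' (par' k) < rnk' k) → tw c par ≤ tw c par' := fun par' rnk' hval =>
      hpmin (par', rnk') (Finset.mem_filter.mpr ⟨Finset.mem_univ _, hval⟩)
    -- per-coordinate bound on the sup
    have hb_bound : ∀ b : Fin d, sSup (S b) ≤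
        ∑ k ∈ ((univ : Finset (Fin n)).erase 0), |c k b - c (par k) b| / dd c k (par k) := by
      intro b
      refine csSup_le (hSne b) ?_
      rintro v ⟨i, j, hij, rfl⟩
      rw [hdd_eq]
      have hD : 0 < dd c i j := dd_pos c hij
      set F := ((univ : Finset (Fin n)).erase 0).filter
        (fun k => dd c k (par k) ≤ dd c i j) with hF
      have hnum : |c i b - c j b| ≤ ∑ x ∈ F, |c x b - c (par x) b| :=
        coord_bound c par rnk hv hmin i j b
      have step1 : |c i b - c j b| / dd c i j ≤ ∑ x ∈ F, |c x b - c (par x) b| / dd c i j := by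
        rw [← Finset.sum_div]
        exact div_le_div_of_nonneg_right hnum hD.le
      refine le_trans step1 ?_
      have step2 : ∀ x ∈ F, |c x b - c (par x) b| / dd c i j
          ≤ |c x b - c (par x) b| / dd c x (par x) := by
        intro x hx
        have hxle : dd c x (par x) ≤ dd c i j := (Finset.mem_filter.mp hx).2
        rcases eq_or_lt_of_le (dd_nonneg c x (par x)) with h0 | hpos
        · rw [dd_coord_zero c h0.symm b]
          simp
        · gcongr
      refine le_trans (Finset.sum_le_sum step2) ?_
      refine Finset.sum_le_sum_of_subset_of_nonneg (Finset.filter_subset _ _) ?_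
      intro x _ _
      exact div_nonneg (abs_nonneg _) (dd_nonneg c _ _)
    -- sum over coordinates
    calc (∑ b : Fin d, sSup (S b))
        ≤ ∑ b : Fin d, ∑ k ∈ ((univ : Finset (Fin n)).erase 0),
            |c k b - c (par k) b| / dd c k (par k) := Finset.sum_le_sum fun b _ => hb_bound b
      _ = ∑ k ∈ ((univ : Finset (Fin n)).erase 0), ∑ b : Fin d,
            |c k b - c (par k) b| / dd c k (par k) := Finset.sum_comm
      _ ≤ ∑ k ∈ ((univ : Finset (Fin n)).erase 0), (1 : ℝ) := by
          refine Finset.sum_le_sum fun k _ => ?_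
          rw [← Finset.sum_div, hdd_eq k (par k)]
          rcases eq_or_lt_of_le (dd_nonneg c k (par k)) with h0 | hpos
          · rw [← h0, div_zero]
            exact zero_le_one
          · rw [div_self (ne_of_gt hpos)]
      _ = ((n - 1 : ℕ) : ℝ) := by
          rw [Finset.sum_const, Finset.card_erase_of_mem (Finset.mem_univ _), Finset.card_univ,
            Fintype.card_fin]
          simp
      _ ≤ (n : ℝ) := by
          have : (n - 1 : ℕ) ≤ n := Nat.sub_le _ _
          exact_mod_cast this
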